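/- Let E be a real inner product space and let p, c, q ∈ E with dist p c = 1 and dist c q = 1. Let ε ∈ (0, 0.066], σ ≥ 3/4, δ = 2ε, and suppose dist p q ≥ σ·ε. Let x = p + δ • (c − p). Then dist q x > δ·(1 + dist p q). -/

import Mathlib

theorem stmt_0 {E : Type*} [NormedAddCommGroup E] [InnerProductSpace ℝ E]
    (p c q : E) (hpc : dist p c = 1) (hcq : dist c q = 1)
    (ε σ δ : ℝ) (hε0 : 0 < ε) (hε1 : ε ≤ 0.066) (hσ : σ ≥ 3 / 4) (hδ : δ = 2 * ε)
    (hpq : dist p q ≥ σ * ε)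
    (x : E) (hx : x = p + δ • (c - p)) :
    dist q x > δ * (1 + dist p q) := by
  set u : E := c - p with hu_def
  set v : E := q - p with hv_def
  have hu : ‖u‖ = 1 := by
    rw [hu_def, ← neg_sub p c, norm_neg, ← dist_eq_norm, hpc]
  have hvu : ‖v - u‖ = 1 := by
    have : v - u = q - c := by rw [hv_def, hu_def]; abel
    rw [this, ← neg_sub c q, norm_neg, ← dist_eq_norm, hcq]
  have hinner : 2 * (inner ℝ v u : ℝ) = ‖v‖ ^ 2 := by
    have h := norm_sub_sq_real v u
    rw [hvu, hu] at h
    nlinarith [h]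
  have hdqx : dist q x ^ 2 = ‖v‖ ^ 2 * (1 - δ) + δ ^ 2 := by
    have hqx : q - x = v - δ • u := by rw [hx, hv_def, hu_def]; abel
    have h := norm_sub_sq_real v (δ • u)
    rw [dist_eq_norm, hqx, h, norm_smul, real_inner_smul_right, hu]
    simp only [Real.norm_eq_abs]
    nlinarith [hinner, sq_abs δ]
  have hvpq : dist p q = ‖v‖ := by
    rw [hv_def, ← neg_sub p q, norm_neg, ← dist_eq_norm]
  have ht : ‖v‖ ≥ 3 / 4 * ε := by
    rw [← hvpq]
    calc dist p q ≥ σ * ε := hpq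
      _ ≥ 3 / 4 * ε := by nlinarith
  have hsq : (δ * (1 + dist p q)) ^ 2 < dist q x ^ 2 := by
    subst hδ
    rw [hvpq, hdqx]
    have htpos : 0 < ‖v‖ := by nlinarith
    have hA : (0:ℝ) ≤ 1 - 2 * ε - 4 * ε ^ 2 := by nlinarith
    have h1 : (0:ℝ) ≤ (‖v‖ - 3 / 4 * ε) * (1 - 2 * ε - 4 * ε ^ 2) :=
      mul_nonneg (by linarith) hA
    have h2 : (0:ℝ) < ε * ‖v‖ * (3 / 4 - 9.5 * ε - 3 * ε ^ 2) := by
      apply mul_pos (mul_pos hε0 htpos); nlinarith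
    nlinarith [mul_nonneg h1 htpos.le, h2]
  have h0 : (0:ℝ) ≤ dist q x := dist_nonneg
  exact lt_of_pow_lt_pow_left₀ 2 h0 hsq
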